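/- Let A be a monoidal category and let K be an object of A with a right dual R, with unit η : I → R⊗K and counit ε : K⊗R → I. Then the following data form a skew left warping of A in which every v_{A,B} is invertible (a Hopf skew left warping): the functor T = −⊗R; the object K; the natural family v_{A,B} : T(TA⊗B) = A⊗R⊗B⊗R → TA⊗TB = A⊗R⊗B⊗R given by the identity (coherence) isomorphism; the morphism v₀ = ε : K⊗R → I; and the natural family k_A = 1_A⊗η : A → A⊗R⊗K. That is, the five skew left warping axioms (W1)–(W5) hold for this data. -/

import Mathlib

open CategoryTheory MonoidalCategory

variable {V : Type*} [Category V] [MonoidalCategory V]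

/-- A skew left warping of the monoidal category `V` (Lack–Street, following Booker–Street):
a functor `T`, an object `K`, natural families `v_{X,Y} : T(TX ⊗ Y) ⟶ TX ⊗ TY` and
`k_X : X ⟶ TX ⊗ K`, and a morphism `v₀ : TK ⟶ I`, satisfying the five warping axioms
(W1)–(W5). -/
def IsSkewLeftWarping (T : V ⥤ V) (K : V)
    (v : ∀ X Y : V, T.obj (T.obj X ⊗ Y) ⟶ T.obj X ⊗ T.obj Y)
    (v₀ : T.obj K ⟶ 𝟙_ V) (k : ∀ X : V, X ⟶ T.obj X ⊗ K) : Prop :=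
  -- naturality of v
  (∀ (X X' Y Y' : V) (f : X ⟶ X') (g : Y ⟶ Y'),
    T.map (T.map f ⊗ₘ g) ≫ v X' Y' = v X Y ≫ (T.map f ⊗ₘ T.map g)) ∧
  -- naturality of k
  (∀ (X X' : V) (f : X ⟶ X'), f ≫ k X' = k X ≫ (T.map f ▷ K)) ∧
  -- (W1)
  (∀ X Y Z : V,
    v (T.obj X ⊗ Y) Z ≫ (v X Y ▷ T.obj Z) ≫ (α_ (T.obj X) (T.obj Y) (T.obj Z)).hom =
      T.map (v X Y ▷ Z) ≫ T.map (α_ (T.obj X) (T.obj Y) Z).hom ≫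
        v X (T.obj Y ⊗ Z) ≫ (T.obj X ◁ v Y Z)) ∧
  -- (W2)
  (∀ Y : V,
    v K Y ≫ (v₀ ▷ T.obj Y) ≫ (λ_ (T.obj Y)).hom =
      T.map (v₀ ▷ Y) ≫ T.map (λ_ Y).hom) ∧
  -- (W3)
  (∀ X : V, T.map (k X) ≫ v X K ≫ (T.obj X ◁ v₀) = (ρ_ (T.obj X)).inv) ∧
  -- (W4)
  (∀ X Y : V,
    k (T.obj X ⊗ Y) ≫ (v X Y ▷ K) ≫ (α_ (T.obj X) (T.obj Y) K).hom =
      T.obj X ◁ k Y) ∧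
  -- (W5)
  (k K ≫ (v₀ ▷ K) ≫ (λ_ K).hom = 𝟙 K)

/-- The functor `T = − ⊗ R`. -/
def tensorRightF (R : V) : V ⥤ V where
  obj X := X ⊗ R
  map f := f ▷ R

/-- If `K` has a right dual `R` in a monoidal category `V`, with unit
`η : I ⟶ R ⊗ K` and counit `ε : K ⊗ R ⟶ I`, then `T = − ⊗ R`, `K`,
`v_{X,Y} : ((X⊗R)⊗Y)⊗R ⟶ (X⊗R)⊗(Y⊗R)` the coherence isomorphism, `v₀ = ε` and
`k_X = 1_X ⊗ η` form a skew left warping of `V` in which every `v_{X,Y}` is invertible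
(a Hopf skew left warping). -/
theorem right_dual_hopf_skew_left_warping (K R : V)
    (η : 𝟙_ V ⟶ R ⊗ K) (ε : K ⊗ R ⟶ 𝟙_ V)
    (htri1 : (ρ_ K).inv ≫ (K ◁ η) ≫ (α_ K R K).inv ≫ (ε ▷ K) ≫ (λ_ K).hom = 𝟙 K)
    (htri2 : (λ_ R).inv ≫ (η ▷ R) ≫ (α_ R K R).hom ≫ (R ◁ ε) ≫ (ρ_ R).hom = 𝟙 R) :
    IsSkewLeftWarping (tensorRightF R) K
      (fun X Y => (α_ (X ⊗ R) Y R).hom)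
      ε
      (fun X => (ρ_ X).inv ≫ (X ◁ η) ≫ (α_ X R K).inv) ∧
    (∀ X Y : V, IsIso ((α_ (X ⊗ R) Y R).hom)) := by
  refine ⟨⟨?_, ?_, ?_, ?_, ?_, ?_, ?_⟩, fun X Y => inferInstance⟩
  · intro X X' Y Y' f g
    simp only [tensorRightF]
    monoidal
  · intro X X' f
    simp only [tensorRightF]
    rw [rightUnitor_inv_naturality_assoc, ← whisker_exchange_assoc]
    simp [associator_inv_naturality]
  · intro X Y Z
    simp only [tensorRightF]
    monoidal
  · intro Y
    simp only [tensorRightF]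
    monoidal
  · intro X
    simp only [tensorRightF]
    have h2 : X ◁ ((λ_ R).inv ≫ (η ▷ R) ≫ (α_ R K R).hom ≫ (R ◁ ε) ≫ (ρ_ R).hom)
        = 𝟙 (X ⊗ R) := by rw [htri2, MonoidalCategory.whiskerLeft_id]
    calc _ = (X ◁ ((λ_ R).inv ≫ (η ▷ R) ≫ (α_ R K R).hom ≫ (R ◁ ε) ≫ (ρ_ R).hom)) ≫
          (ρ_ (X ⊗ R)).inv := by
            simp only [MonoidalCategory.whiskerLeft_comp]
            monoidal
      _ = (ρ_ (X ⊗ R)).inv := by rw [h2, Category.id_comp]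
  · intro X Y
    simp only [tensorRightF]
    monoidal
  · simp only [tensorRightF, Category.assoc]
    exact htri1
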